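/- Every antimatroid admits a representation by maximum-weight matchings: for every antimatroid (S, 𝓕) on a finite set S there exists a weighted matching instance (G = (U,V;E), w) with V = S, in which all matchings have pairwise distinct weights, such that the codomain of the induced map F : 2^U → 2^V coincides with 𝓕, i.e., { F(U') : U' ⊆ U } = 𝓕. -/

import Mathlib

open scoped Classical






/-- `M` is a matching with edges inside the edge set `E`:
no two distinct edges of `M` share a left or a right endpoint. -/
def IsMatching {U V : Type*} (E M : Finset (U × V)) : Prop :=
  M ⊆ E ∧ ∀ e₁ ∈ M, ∀ e₂ ∈ M, (e₁.1 = e₂.1 ∨ e₁.2 = e₂.2) → e₁ = e₂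

/-- The edge set of the subgraph `G[U' ∪ V]` induced by deleting
the left vertices outside `U'` (and their incident edges). -/
noncomputable def restrictL {U V : Type*} (E : Finset (U × V)) (U' : Finset U) : Finset (U × V) :=
  E.filter (fun e => e.1 ∈ U')

/-- The weight of a matching: the sum of the weights of its edges. -/
noncomputable def mWeight {U V : Type*} (w : U × V → ℝ) (M : Finset (U × V)) : ℝ :=
  ∑ e ∈ M, w e

/-- `M` is a maximum-weight matching of the graph with edge set `E`. -/
def IsMaxMatching {U V : Type*} (E : Finset (U × V)) (w : U × V → ℝ)
    (M : Finset (U × V)) : Prop :=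
  IsMatching E M ∧ ∀ M' : Finset (U × V), IsMatching E M' → mWeight w M' ≤ mWeight w M

/-- All matchings of the graph with edge set `E` have pairwise distinct weights. -/
def DistinctWeights {U V : Type*} (E : Finset (U × V)) (w : U × V → ℝ) : Prop :=
  ∀ M₁ M₂ : Finset (U × V), IsMatching E M₁ → IsMatching E M₂ → M₁ ≠ M₂ →
    mWeight w M₁ ≠ mWeight w M₂

/-- The codomain `{ F(U') : U' ⊆ U }` of the map `F` induced by the weighted
matching instance: the family of all sets of right vertices matched by the
(unique) maximum-weight matching `MM(G, w; U')` of a subgraph `G[U' ∪ V]`. -/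
def mmFamily {U V : Type*} (E : Finset (U × V)) (w : U × V → ℝ) : Set (Finset V) :=
  {X | ∃ (U' : Finset U) (M : Finset (U × V)),
    IsMaxMatching (restrictL E U') w M ∧ X = M.image Prod.snd}

section AMaux

variable {α β : Type*} [DecidableEq α] [DecidableEq β]

def AMCompat (e f : α × β) : Prop := e.1 ≠ f.1 ∧ e.2 ≠ f.2

lemma AMCompat.symm' {e f : α × β} (h : AMCompat e f) : AMCompat f e := ⟨h.1.symm, h.2.symm⟩

lemma not_amCompat_self (e : α × β) : ¬ AMCompat e e := fun h => h.1 rfl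

noncomputable def amFold : List (α × β) → Finset (α × β) → Finset (α × β)
  | [], M => M
  | e :: l, M => amFold l (if ∀ f ∈ M, AMCompat e f then insert e M else M)

lemma amFold_acc_subset : ∀ (l : List (α × β)) (M : Finset (α × β)), M ⊆ amFold l M := by
  intro l
  induction l with
  | nil => intro M; exact le_refl M
  | cons e l ih =>
    intro M
    simp only [amFold]
    split
    · exact (Finset.subset_insert e M).trans (ih _)
    · exact ih _

lemma amFold_subset : ∀ (l : List (α × β)) (M : Finset (α × β)),
    amFold l M ⊆ M ∪ l.toFinset := by
  intro l
  induction l with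
  | nil => intro M; simp [amFold]
  | cons e l ih =>
    intro M
    simp only [amFold]
    have h2 : M ∪ l.toFinset ⊆ M ∪ (e :: l).toFinset := by
      apply Finset.union_subset_union_right; intro x hx; simp [List.mem_toFinset] at *; tauto
    split
    · refine (ih _).trans ?_
      intro x hx
      rcases Finset.mem_union.1 hx with hx | hx
      · rcases Finset.mem_insert.1 hx with rfl | hx
        · simp
        · exact Finset.mem_union_left _ hx
      · exact h2 (Finset.mem_union_right _ hx)
    · exact (ih _).trans h2

lemma amFold_matching : ∀ (l : List (α × β)) (M : Finset (α × β)),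
    (∀ e₁ ∈ M, ∀ e₂ ∈ M, e₁ ≠ e₂ → AMCompat e₁ e₂) →
    (∀ e₁ ∈ amFold l M, ∀ e₂ ∈ amFold l M, e₁ ≠ e₂ → AMCompat e₁ e₂) := by
  intro l
  induction l with
  | nil => intro M hM; exact hM
  | cons e l ih =>
    intro M hM
    simp only [amFold]
    split
    · next hacc =>
      apply ih
      intro e₁ h₁ e₂ h₂ hne
      rcases Finset.mem_insert.1 h₁ with h₁ | h₁
      · rcases Finset.mem_insert.1 h₂ with h₂ | h₂
        · exact absurd (h₁.trans h₂.symm) hne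
        · exact h₁ ▸ hacc _ h₂
      · rcases Finset.mem_insert.1 h₂ with h₂ | h₂
        · exact h₂ ▸ (hacc _ h₁).symm'
        · exact hM _ h₁ _ h₂ hne
    · exact ih M hM

def AMDom (w : α × β → ℝ) : List (α × β) → Prop
  | [] => True
  | e :: l => (l.map w).sum < w e ∧ AMDom w l

lemma AMDom.sublist {w : α × β → ℝ} (hw : ∀ e, 0 ≤ w e) :
    ∀ {l₁ l₂ : List (α × β)}, l₁.Sublist l₂ → AMDom w l₂ → AMDom w l₁ := by
  intro l₁ l₂ h
  induction h with
  | slnil => intro h; trivial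
  | cons a h ih => intro hd; exact ih hd.2
  | cons_cons a h ih =>
    intro hd
    refine ⟨lt_of_le_of_lt ?_ hd.1, ih hd.2⟩
    exact List.Sublist.sum_le_sum (h.map w)
      (fun x hx => by obtain ⟨a, -, rfl⟩ := List.mem_map.1 hx; exact hw a)

lemma amFold_max {w : α × β → ℝ} (hw : ∀ e, 0 < w e) :
    ∀ (l : List (α × β)) (M₀ M : Finset (α × β)), l.Nodup → AMDom w l →
    M₀ ⊆ M → M ⊆ M₀ ∪ l.toFinset →
    (∀ e₁ ∈ M, ∀ e₂ ∈ M, e₁ ≠ e₂ → AMCompat e₁ e₂) →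
    ∑ e ∈ M, w e ≤ ∑ e ∈ amFold l M₀, w e := by
  intro l
  induction l with
  | nil =>
    intro M₀ M _ _ h1 h2 _
    have : M = M₀ := le_antisymm (by simpa using h2) h1
    simp [amFold, this]
  | cons e l ih =>
    intro M₀ M hnd hdom hM₀M hMsub hpair
    have hnd' : l.Nodup := hnd.of_cons
    have hdom' : AMDom w l := hdom.2
    simp only [amFold]
    split
    · next hacc =>
      have heM₀ : e ∉ M₀ := fun h => not_amCompat_self e (hacc e h)
      by_cases heM : e ∈ M
      · apply ih (insert e M₀) M hnd' hdom' (Finset.insert_subset heM hM₀M) ?_ hpair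
        intro x hx
        rcases Finset.mem_union.1 (hMsub hx) with hx' | hx'
        · exact Finset.mem_union_left _ (Finset.mem_insert_of_mem hx')
        · simp only [List.toFinset_cons, Finset.mem_insert] at hx'
          rcases hx' with rfl | hx'
          · exact Finset.mem_union_left _ (Finset.mem_insert_self _ _)
          · exact Finset.mem_union_right _ hx'
      · have hsd : M \ M₀ ⊆ l.toFinset := by
          intro x hx
          rcases Finset.mem_sdiff.1 hx with ⟨hx1, hx2⟩
          rcases Finset.mem_union.1 (hMsub hx1) with hx' | hx'
          · exact absurd hx' hx2
          · simp only [List.toFinset_cons, Finset.mem_insert] at hx'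
            rcases hx' with rfl | hx'
            · exact absurd hx1 heM
            · exact hx'
        have h1 : ∑ x ∈ M \ M₀, w x < w e := by
          calc ∑ x ∈ M \ M₀, w x ≤ ∑ x ∈ l.toFinset, w x :=
                Finset.sum_le_sum_of_subset_of_nonneg hsd (fun x _ _ => (hw x).le)
            _ = (l.map w).sum := List.sum_toFinset w hnd'
            _ < w e := hdom.1
        have h2 : ∑ x ∈ M, w x < ∑ x ∈ insert e M₀, w x := by
          rw [Finset.sum_insert heM₀, ← Finset.sum_sdiff hM₀M]
          linarith
        refine h2.le.trans ?_
        apply Finset.sum_le_sum_of_subset_of_nonneg (amFold_acc_subset l _)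
          (fun x _ _ => (hw x).le)
    · next hacc =>
      push_neg at hacc
      obtain ⟨f₀, hf₀, hnc⟩ := hacc
      apply ih M₀ M hnd' hdom' hM₀M ?_ hpair
      intro x hx
      rcases Finset.mem_union.1 (hMsub hx) with hx' | hx'
      · exact Finset.mem_union_left _ hx'
      · simp only [List.toFinset_cons, Finset.mem_insert] at hx'
        rcases hx' with rfl | hx'
        · by_cases hxf : x = f₀
          · exact Finset.mem_union_left _ (hxf ▸ hf₀)
          · exact absurd (hpair x hx f₀ (hM₀M hf₀) hxf) hnc
        · exact Finset.mem_union_right _ hx'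

lemma amFold_append (l₁ l₂ : List (α × β)) (M : Finset (α × β)) :
    amFold (l₁ ++ l₂) M = amFold l₂ (amFold l₁ M) := by
  induction l₁ generalizing M with
  | nil => simp [amFold]
  | cons e l ih => simp only [List.cons_append, amFold]; exact ih _

lemma amFold_stuck (u : α) : ∀ (ns : List β) (M : Finset (α × β)),
    (∃ f ∈ M, f.1 = u) → amFold (ns.map (fun a => (u, a))) M = M := by
  intro ns
  induction ns with
  | nil => intro M _; rfl
  | cons a ns ih =>
    intro M hM
    obtain ⟨f, hf, hfu⟩ := hM
    have : ¬ ∀ g ∈ M, AMCompat (u, a) g := by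
      intro h
      exact (h f hf).1 hfu.symm
    simp only [List.map_cons, amFold, if_neg this]
    exact ih M ⟨f, hf, hfu⟩

lemma amFold_block (u : α) : ∀ (ns : List β) (M : Finset (α × β)),
    (∀ f ∈ M, f.1 ≠ u) →
    (amFold (ns.map (fun a => (u, a))) M = M ∧ ∀ a ∈ ns, a ∈ M.image Prod.snd) ∨
    (∃ l₁ a l₂, ns = l₁ ++ a :: l₂ ∧ (∀ b ∈ l₁, b ∈ M.image Prod.snd) ∧
      a ∉ M.image Prod.snd ∧ amFold (ns.map (fun a => (u, a))) M = insert (u, a) M) := by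
  intro ns
  induction ns with
  | nil => intro M _; left; exact ⟨rfl, by simp⟩
  | cons a ns ih =>
    intro M hM
    by_cases ha : a ∈ M.image Prod.snd
    · obtain ⟨f, hf, hfa⟩ := Finset.mem_image.1 ha
      have hrej : ¬ ∀ g ∈ M, AMCompat (u, a) g := fun h => (h f hf).2 hfa.symm
      simp only [List.map_cons, amFold, if_neg hrej]
      rcases ih M hM with ⟨h1, h2⟩ | ⟨l₁, b, l₂, h1, h2, h3, h4⟩
      · left
        refine ⟨h1, ?_⟩
        intro x hx
        rcases List.mem_cons.1 hx with rfl | hx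
        · exact ha
        · exact h2 x hx
      · right
        refine ⟨a :: l₁, b, l₂, by rw [h1]; rfl, ?_, h3, h4⟩
        intro x hx
        rcases List.mem_cons.1 hx with rfl | hx
        · exact ha
        · exact h2 x hx
    · have hok : ∀ g ∈ M, AMCompat (u, a) g := by
        intro g hg
        refine ⟨fun h => hM g hg h.symm, fun h => ha ?_⟩
        exact Finset.mem_image.2 ⟨g, hg, h.symm⟩
      simp only [List.map_cons, amFold, if_pos hok]
      rw [amFold_stuck u ns _ ⟨(u, a), Finset.mem_insert_self _ _, rfl⟩]
      right
      exact ⟨[], a, ns, rfl, by simp, ha, rfl⟩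

end AMaux
section AMaux2

variable {α β : Type*} [DecidableEq α] [DecidableEq β]

lemma amFold_feasible (𝓕 : Set (Finset β))
    (hunion : ∀ X ∈ 𝓕, ∀ Y ∈ 𝓕, X ∪ Y ∈ 𝓕) (nsOf : α → List β) :
    ∀ (us : List α) (M : Finset (α × β)), us.Nodup →
    (∀ f ∈ M, ∀ u ∈ us, f.1 ≠ u) →
    (∀ u ∈ us, ∀ p, p <+: nsOf u → p.toFinset ∈ 𝓕) →
    M.image Prod.snd ∈ 𝓕 →
    (amFold (us.flatMap (fun u => (nsOf u).map (fun a => (u, a)))) M).image Prod.snd ∈ 𝓕 := by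
  intro us
  induction us with
  | nil => intro M _ _ _ hM; simpa [amFold] using hM
  | cons u us ih =>
    intro M hnd hfresh hpre hM
    rw [List.flatMap_cons, amFold_append]
    rcases amFold_block u (nsOf u) M (fun f hf => hfresh f hf u (List.mem_cons_self)) with
      ⟨h1, _⟩ | ⟨l₁, a, l₂, h1, h2, h3, h4⟩
    · rw [h1]
      exact ih M hnd.of_cons (fun f hf v hv => hfresh f hf v (List.mem_cons_of_mem _ hv))
        (fun v hv => hpre v (List.mem_cons_of_mem _ hv)) hM
    · rw [h4]
      have hbu : u ∉ us := (List.nodup_cons.1 hnd).1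
      apply ih (insert (u, a) M) hnd.of_cons
      · intro f hf v hv
        rcases Finset.mem_insert.1 hf with hfe | hf
        · rw [hfe]
          intro h
          have : u = v := h
          exact hbu (this ▸ hv)
        · exact hfresh f hf v (List.mem_cons_of_mem _ hv)
      · exact fun v hv => hpre v (List.mem_cons_of_mem _ hv)
      · have hpref : (l₁ ++ [a]).toFinset ∈ 𝓕 := by
          apply hpre u (List.mem_cons_self)
          exact ⟨l₂, by rw [h1]; simp⟩
        have heq : (insert (u, a) M).image Prod.snd = M.image Prod.snd ∪ (l₁ ++ [a]).toFinset := by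
          rw [Finset.image_insert]
          apply Finset.Subset.antisymm
          · intro x hx
            rcases Finset.mem_insert.1 hx with rfl | hx
            · apply Finset.mem_union_right
              simp
            · exact Finset.mem_union_left _ hx
          · apply Finset.union_subset
            · exact Finset.subset_insert _ _
            · intro x hx
              rw [List.toFinset_append, Finset.mem_union] at hx
              rcases hx with hx | hx
              · exact Finset.mem_insert_of_mem (h2 x (List.mem_toFinset.1 hx))
              · have : x = a := by simpa using hx
                rw [this]
                exact Finset.mem_insert_self _ _
        rw [heq]
        exact hunion _ hM _ hpref

lemma amFold_exact (nsOf : α → List β) :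
    ∀ (us : List α) (cl : List β), cl.Nodup → us.Nodup → us.length = cl.length →
    (∀ (i : ℕ) (h : i < us.length), nsOf us[i] = cl.take (i + 1)) →
    ((amFold (us.flatMap (fun u => (nsOf u).map (fun a => (u, a)))) ∅).image Prod.snd
        = cl.toFinset
      ∧ ∀ f ∈ amFold (us.flatMap (fun u => (nsOf u).map (fun a => (u, a)))) ∅, f.1 ∈ us) := by
  intro us
  induction us using List.reverseRecOn with
  | nil =>
    intro cl _ _ hlen _
    have : cl = [] := List.length_eq_zero_iff.1 hlen.symm
    subst this
    simp [amFold]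
  | append_singleton us b ih =>
    intro cl hc hnd hlen hidx
    have hk : us.length < cl.length := by rw [← hlen]; simp
    have hih := ih (cl.take us.length) (hc.sublist (List.take_sublist _ _))
      (hnd.sublist (by simp))
      (by simp only [List.length_take]; omega)
      (by
        intro i hi
        have hi2 : i < (us ++ [b]).length := by simp; omega
        have h1 := hidx i hi2
        rw [List.getElem_append_left hi] at h1
        rw [h1, List.take_take]
        congr 1
        omega)
    obtain ⟨himg, hfst⟩ := hih
    have hbns : nsOf b = cl.take (us.length + 1) := by
      have h1 := hidx us.length (by simp)
      rwa [List.getElem_concat_length (l := us) (a := b) (i := us.length) rfl] at h1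
    have hbfresh : ∀ f ∈ amFold (us.flatMap (fun u => (nsOf u).map (fun a => (u, a)))) ∅,
        f.1 ≠ b := by
      intro f hf h
      have hbus : b ∈ us := h ▸ hfst f hf
      have h2 : (us ++ [b]).Nodup := hnd
      rw [List.nodup_append'] at h2
      exact h2.2.2 hbus (List.mem_singleton.2 rfl)
    rw [List.flatMap_append, amFold_append, List.flatMap_singleton]
    have htake : cl.take (us.length + 1) = cl.take us.length ++ [cl[us.length]] := by
      rw [List.take_succ, List.getElem?_eq_getElem hk]
      rfl
    have hcknotin : cl[us.length] ∉ (cl.take us.length).toFinset := by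
      rw [List.mem_toFinset]
      intro hmem
      obtain ⟨j, hj, hj2⟩ := List.mem_iff_getElem.1 hmem
      have hjk : j < us.length := by
        have := hj; simp at this; omega
      rw [List.getElem_take] at hj2
      have := (List.Nodup.getElem_inj_iff hc).1 hj2
      omega
    rcases amFold_block b (nsOf b)
        (amFold (us.flatMap (fun u => (nsOf u).map (fun a => (u, a)))) ∅) hbfresh with
      ⟨h1, h2⟩ | ⟨l₁, a, l₂, h1, h2, h3, h4⟩
    · exfalso
      have hmem : cl[us.length] ∈ nsOf b := by
        rw [hbns, htake]
        exact List.mem_append_right _ (List.mem_singleton.2 rfl)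
      have := h2 _ hmem
      rw [himg] at this
      exact hcknotin this
    · have ha : a = cl[us.length] := by
        have hamem : a ∈ nsOf b := by rw [h1]; simp
        rw [hbns, htake] at hamem
        rcases List.mem_append.1 hamem with hx | hx
        · exfalso; apply h3; rw [himg, List.mem_toFinset]; exact hx
        · simpa using hx
      rw [h4, ha]
      constructor
      · rw [Finset.image_insert, himg]
        have hcfull : cl.take (us.length + 1) = cl := by
          apply List.take_of_length_le
          have h5 : (us ++ [b]).length = cl.length := hlen
          simp at h5
          omega
        conv_rhs => rw [← hcfull]
        rw [htake]
        ext x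
        simp only [Finset.mem_insert, List.toFinset_append, List.mem_toFinset,
          Finset.mem_union, List.mem_singleton]
        tauto
      · intro f hf
        rcases Finset.mem_insert.1 hf with hfe | hf
        · rw [hfe]; simp
        · exact List.mem_append_left _ (hfst f hf)

end AMaux2
section AMaux3

variable {α β : Type*} [DecidableEq α] [DecidableEq β]

lemma sum_two_pow_lt (r : α × β → ℕ) :
    ∀ (l : List (α × β)) (m : ℕ), (∀ f ∈ l, r f < m) →
    List.Pairwise (fun e f => r f < r e) l →
    (l.map (fun e => (2:ℝ) ^ (r e))).sum < 2 ^ m := by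
  intro l
  induction l with
  | nil => intro m _ _; simpa using (by positivity : (0:ℝ) < 2 ^ m)
  | cons e l ih =>
    intro m hm hp
    rw [List.map_cons, List.sum_cons]
    have h1 : (l.map (fun e => (2:ℝ) ^ (r e))).sum < 2 ^ (r e) :=
      ih (r e) (fun f hf => (List.pairwise_cons.1 hp).1 f hf) (List.pairwise_cons.1 hp).2
    have h2 : (2:ℝ) ^ (r e) * 2 ≤ 2 ^ m := by
      rw [← pow_succ]
      apply pow_le_pow_right₀ (by norm_num)
      exact hm e (List.mem_cons_self)
    nlinarith [h1, h2]

lemma amDom_two_pow (r : α × β → ℕ) (l : List (α × β))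
    (h : List.Pairwise (fun e f => r f < r e) l) :
    AMDom (fun e => (2:ℝ) ^ (r e)) l := by
  induction l with
  | nil => trivial
  | cons e l ih =>
    refine ⟨?_, ih (List.pairwise_cons.1 h).2⟩
    exact sum_two_pow_lt r l (r e) (List.pairwise_cons.1 h).1 (List.pairwise_cons.1 h).2

lemma two_pow_sum_injective_aux :
    ∀ (N : ℕ) (A B : Finset ℕ), A ⊆ Finset.range N → B ⊆ Finset.range N →
    (∑ a ∈ A, (2:ℝ) ^ a) = ∑ b ∈ B, (2:ℝ) ^ b → A = B := by
  intro N
  induction N with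
  | zero =>
    intro A B hA hB _
    simp only [Finset.range_zero, Finset.subset_empty] at hA hB
    rw [hA, hB]
  | succ N ih =>
    intro A B hA hB hsum
    have hrange : ∀ (C : Finset ℕ), C ⊆ Finset.range (N + 1) → N ∉ C → C ⊆ Finset.range N := by
      intro C hC hN x hx
      have := hC hx
      rw [Finset.mem_range] at *
      rcases Nat.lt_succ_iff_lt_or_eq.1 this with h | rfl
      · exact h
      · exact absurd hx hN
    have hbound : ∀ (C : Finset ℕ), C ⊆ Finset.range N → (∑ a ∈ C, (2:ℝ) ^ a) < 2 ^ N := by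
      intro C hC
      calc (∑ a ∈ C, (2:ℝ) ^ a) ≤ ∑ a ∈ Finset.range N, (2:ℝ) ^ a :=
            Finset.sum_le_sum_of_subset_of_nonneg hC (fun i _ _ => by positivity)
        _ = 2 ^ N - 1 := by
            rw [geom_sum_eq (by norm_num : (2:ℝ) ≠ 1)]
            norm_num
        _ < 2 ^ N := by linarith
    have hlow : ∀ (C : Finset ℕ), N ∈ C → (2:ℝ) ^ N ≤ ∑ a ∈ C, (2:ℝ) ^ a :=
      fun C hC => Finset.single_le_sum (fun i _ => by positivity) hC
    by_cases hNA : N ∈ A <;> by_cases hNB : N ∈ B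
    · have hA' : A.erase N ⊆ Finset.range N :=
        hrange _ ((A.erase_subset N).trans hA) (Finset.notMem_erase N A)
      have hB' : B.erase N ⊆ Finset.range N :=
        hrange _ ((B.erase_subset N).trans hB) (Finset.notMem_erase N B)
      have : A.erase N = B.erase N := by
        apply ih _ _ hA' hB'
        have h1 := Finset.add_sum_erase A (fun a => (2:ℝ) ^ a) hNA
        have h2 := Finset.add_sum_erase B (fun a => (2:ℝ) ^ a) hNB
        rw [← h1, ← h2] at hsum
        linarith
      rw [← Finset.insert_erase hNA, ← Finset.insert_erase hNB, this]
    · exfalso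
      have := hlow A hNA
      have := hbound B (hrange B hB hNB)
      linarith
    · exfalso
      have := hlow B hNB
      have := hbound A (hrange A hA hNA)
      linarith
    · exact ih _ _ (hrange A hA hNA) (hrange B hB hNB) hsum

lemma two_pow_sum_injective (A B : Finset ℕ)
    (h : (∑ a ∈ A, (2:ℝ) ^ a) = ∑ b ∈ B, (2:ℝ) ^ b) : A = B := by
  set N := (A ∪ B).sup (· + 1) with hN
  apply two_pow_sum_injective_aux N A B ?_ ?_ h
  · intro x hx
    rw [Finset.mem_range]
    have : x + 1 ≤ N := Finset.le_sup (f := (· + 1)) (Finset.mem_union_left _ hx)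
    omega
  · intro x hx
    rw [Finset.mem_range]
    have : x + 1 ≤ N := Finset.le_sup (f := (· + 1)) (Finset.mem_union_right _ hx)
    omega

/-- helper: filtering a flatMap of blocks by a predicate on the left vertex. -/
lemma filter_flatMap_block {γ : Type*} (us : List γ) (q : γ → Prop) [DecidablePred q]
    (nsOf : γ → List β) :
    ((us.flatMap (fun u => (nsOf u).map (fun a => (u, a)))).filter (fun e => q e.1)) =
    (us.filter (fun u => q u)).flatMap (fun u => (nsOf u).map (fun a => (u, a))) := by
  induction us with
  | nil => simp
  | cons u us ih =>
    rw [List.flatMap_cons, List.filter_append, ih]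
    by_cases hq : q u
    · rw [List.filter_cons_of_pos (by simpa using hq), List.flatMap_cons]
      congr 1
      apply List.filter_eq_self.2
      intro e he
      obtain ⟨a, _, rfl⟩ := List.mem_map.1 he
      simpa using hq
    · rw [List.filter_cons_of_neg (by simpa using hq)]
      have : ((nsOf u).map (fun a => (u, a))).filter (fun e => q e.1) = [] := by
        apply List.filter_eq_nil_iff.2
        intro e he
        obtain ⟨a, _, rfl⟩ := List.mem_map.1 he
        simpa using hq
      rw [this, List.nil_append]

lemma flatMap_eq_single {γ δ : Type*} [DecidableEq γ] :
    ∀ (l : List γ), l.Nodup → ∀ (x : γ), x ∈ l → ∀ (v : List δ),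
    (l.flatMap (fun y => if y = x then v else [])) = v := by
  intro l
  induction l with
  | nil => intro _ x hx; simp at hx
  | cons y l ih =>
    intro hnd x hx v
    rw [List.flatMap_cons]
    by_cases hyx : y = x
    · rw [if_pos hyx]
      have : l.flatMap (fun z => if z = x then v else []) = [] := by
        apply List.flatMap_eq_nil_iff.2
        intro z hz
        rw [if_neg]
        intro h
        exact (List.nodup_cons.1 hnd).1 (hyx ▸ h ▸ hz)
      rw [this, List.append_nil]
    · rw [if_neg hyx, List.nil_append]
      have hxl : x ∈ l := by
        rcases List.mem_cons.1 hx with h | h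
        · exact absurd h.symm hyx
        · exact h
      exact ih (List.nodup_cons.1 hnd).2 x hxl v

lemma exists_good_rank {γ : Type*} [DecidableEq γ] (l : List γ) (hl : l.Nodup) :
    ∃ rk : γ → ℕ, List.Pairwise (fun e f => rk f < rk e) l ∧
      (∀ e ∈ l, ∀ f ∈ l, rk e = rk f → e = f) := by
  refine ⟨fun e => l.length - 1 - l.idxOf e, ?_, ?_⟩
  · rw [List.pairwise_iff_getElem]
    intro i j hi hj hij
    simp only
    rw [hl.idxOf_getElem i hi, hl.idxOf_getElem j hj]
    omega
  · intro e he f hf hrk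
    have h1 : l.idxOf e < l.length := List.idxOf_lt_length_iff.2 he
    have h2 : l.idxOf f < l.length := List.idxOf_lt_length_iff.2 hf
    simp only at hrk
    have hidx : l.idxOf e = l.idxOf f := by omega
    have he2 : l[l.idxOf e]'h1 = e := List.getElem_idxOf h1
    have hf2 : l[l.idxOf f]'h2 = f := List.getElem_idxOf h2
    rw [← he2, ← hf2]
    congr 1

end AMaux3

/-- Existence of feasibility chains in an antimatroid. -/
lemma antimatroid_exists_chain {S : Type*} [DecidableEq S] (𝓕 : Set (Finset S))
    (hempty : ∅ ∈ 𝓕) (hacc : ∀ X ∈ 𝓕, X ≠ ∅ → ∃ v ∈ X, X.erase v ∈ 𝓕) :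
    ∀ X ∈ 𝓕, ∃ cl : List S, cl.Nodup ∧ cl.toFinset = X ∧
      ∀ i, (cl.take i).toFinset ∈ 𝓕 := by
  have main : ∀ (m : ℕ) (X : Finset S), X ∈ 𝓕 → X.card = m → ∃ cl : List S, cl.Nodup ∧
      cl.toFinset = X ∧ ∀ i, (cl.take i).toFinset ∈ 𝓕 := by
    intro m
    induction m using Nat.strong_induction_on with
    | _ m ih =>
      intro X hX hcard
      by_cases hXe : X = ∅
      · refine ⟨[], by simp, by simp [hXe], by simp [hempty]⟩
      · obtain ⟨v, hv, herase⟩ := hacc X hX hXe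
        have hcard' : (X.erase v).card < m := by
          rw [← hcard]
          exact Finset.card_erase_lt_of_mem hv
        obtain ⟨cl, hnd, hfin, hpre⟩ := ih _ hcard' (X.erase v) herase rfl
        refine ⟨cl ++ [v], ?_, ?_, ?_⟩
        · rw [List.nodup_append']
          refine ⟨hnd, by simp, ?_⟩
          intro x hx hx2
          rw [List.mem_singleton] at hx2
          have hxm : x ∈ X.erase v := hfin ▸ List.mem_toFinset.2 hx
          exact (Finset.mem_erase.1 hxm).1 hx2
        · rw [List.toFinset_append, hfin]
          ext x
          simp only [Finset.mem_union, Finset.mem_erase, List.mem_toFinset, List.mem_singleton]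
          constructor
          · rintro (⟨_, h⟩ | rfl)
            · exact h
            · exact hv
          · intro hx
            by_cases hxv : x = v
            · exact Or.inr hxv
            · exact Or.inl ⟨hxv, hx⟩
        · intro i
          by_cases hi : i ≤ cl.length
          · rw [List.take_append_of_le_length hi]
            exact hpre i
          · rw [List.take_of_length_le (by simp; omega)]
            rw [List.toFinset_append]
            have h1 : (cl.toFinset ∪ [v].toFinset) = X := by
              rw [hfin]
              ext x
              simp only [Finset.mem_union, Finset.mem_erase, List.toFinset_cons,
                List.toFinset_nil, Finset.mem_insert, Finset.notMem_empty, or_false]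
              constructor
              · rintro (⟨_, h⟩ | rfl)
                · exact h
                · exact hv
              · intro hx
                by_cases hxv : x = v
                · exact Or.inr hxv
                · exact Or.inl ⟨hxv, hx⟩
            rw [h1]
            exact hX
  intro X hX
  exact main X.card X hX rfl
section AMaux4

variable {β : Type*} [DecidableEq β]

def amL {n : ℕ} (nsOf : Fin n → List β) : List (Fin n × β) :=
  (List.finRange n).flatMap (fun u => (nsOf u).map (fun a => (u, a)))

def amLU {n : ℕ} (nsOf : Fin n → List β) (U' : Finset (Fin n)) : List (Fin n × β) :=
  ((List.finRange n).filter (fun u => u ∈ U')).flatMap (fun u => (nsOf u).map (fun a => (u, a)))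

noncomputable def amG {n : ℕ} (nsOf : Fin n → List β) (U' : Finset (Fin n)) :
    Finset (Fin n × β) := amFold (amLU nsOf U') ∅

lemma amLU_eq_filter {n : ℕ} (nsOf : Fin n → List β) (U' : Finset (Fin n)) :
    (amL nsOf).filter (fun e => e.1 ∈ U') = amLU nsOf U' :=
  filter_flatMap_block (List.finRange n) (fun u => u ∈ U') nsOf

lemma amLU_sublist {n : ℕ} (nsOf : Fin n → List β) (U' : Finset (Fin n)) :
    (amLU nsOf U').Sublist (amL nsOf) :=
  (amLU_eq_filter nsOf U') ▸ (List.filter_sublist (l := amL nsOf))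

lemma restrict_amL {n : ℕ} (nsOf : Fin n → List β) (U' : Finset (Fin n)) :
    restrictL (amL nsOf).toFinset U' = (amLU nsOf U').toFinset := by
  rw [← amLU_eq_filter]
  ext e
  simp [restrictL, List.mem_filter]

lemma amG_isMatching {n : ℕ} (nsOf : Fin n → List β) (U' : Finset (Fin n)) :
    IsMatching (restrictL (amL nsOf).toFinset U') (amG nsOf U') := by
  constructor
  · rw [restrict_amL]
    simpa [amG] using amFold_subset (amLU nsOf U') ∅
  · intro e₁ h₁ e₂ h₂ hor
    by_contra hne
    have hcompat := amFold_matching (amLU nsOf U') ∅ (by simp) e₁ h₁ e₂ h₂ hne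
    rcases hor with h | h
    · exact hcompat.1 h
    · exact hcompat.2 h

lemma amG_isMaxMatching {n : ℕ} (nsOf : Fin n → List β) (w : Fin n × β → ℝ)
    (hwpos : ∀ e, 0 < w e) (hLnd : (amL nsOf).Nodup) (hDom : AMDom w (amL nsOf))
    (U' : Finset (Fin n)) :
    IsMaxMatching (restrictL (amL nsOf).toFinset U') w (amG nsOf U') := by
  refine ⟨amG_isMatching nsOf U', ?_⟩
  intro M' hM'
  have hsub : M' ⊆ ∅ ∪ (amLU nsOf U').toFinset := by
    rw [Finset.empty_union, ← restrict_amL]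
    exact hM'.1
  have hpair : ∀ e₁ ∈ M', ∀ e₂ ∈ M', e₁ ≠ e₂ → AMCompat e₁ e₂ := by
    intro e₁ h₁ e₂ h₂ hne
    constructor
    · intro h; exact hne (hM'.2 e₁ h₁ e₂ h₂ (Or.inl h))
    · intro h; exact hne (hM'.2 e₁ h₁ e₂ h₂ (Or.inr h))
  exact amFold_max hwpos (amLU nsOf U') ∅ M' (hLnd.sublist (amLU_sublist nsOf U'))
    (AMDom.sublist (fun e => (hwpos e).le) (amLU_sublist nsOf U') hDom)
    (Finset.empty_subset _) hsub hpair

lemma amG_unique {n : ℕ} (nsOf : Fin n → List β) (w : Fin n × β → ℝ)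
    (hwpos : ∀ e, 0 < w e) (hLnd : (amL nsOf).Nodup) (hDom : AMDom w (amL nsOf))
    (hDW : DistinctWeights (amL nsOf).toFinset w) (U' : Finset (Fin n))
    (M : Finset (Fin n × β)) (hM : IsMaxMatching (restrictL (amL nsOf).toFinset U') w M) :
    M = amG nsOf U' := by
  by_contra hne
  have hmatchE : ∀ M' : Finset (Fin n × β), IsMatching (restrictL (amL nsOf).toFinset U') M' →
      IsMatching (amL nsOf).toFinset M' :=
    fun M' h => ⟨fun e he => by
      have := h.1 he
      unfold restrictL at this
      rw [Finset.filter_congr_decidable] at this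
      exact (Finset.mem_filter.1 this).1, h.2⟩
  have h1 : mWeight w M ≤ mWeight w (amG nsOf U') :=
    (amG_isMaxMatching nsOf w hwpos hLnd hDom U').2 M hM.1
  have h2 : mWeight w (amG nsOf U') ≤ mWeight w M := hM.2 _ (amG_isMatching nsOf U')
  exact hDW M _ (hmatchE M hM.1) (hmatchE _ (amG_isMatching nsOf U')) hne (le_antisymm h1 h2)

end AMaux4
/-- Every antimatroid `(S, 𝓕)` admits a representation by maximum-weight
matchings: there is a weighted matching instance with right vertex set `S`,
all of whose matchings have pairwise distinct weights, whose induced map `F`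
has codomain exactly `𝓕`. -/
theorem antimatroid_mm_representation {S : Type*} [Fintype S]
    (𝓕 : Set (Finset S))
    (hempty : ∅ ∈ 𝓕)
    (hacc : ∀ X ∈ 𝓕, X ≠ ∅ → ∃ v ∈ X, X.erase v ∈ 𝓕)
    (hunion : ∀ X ∈ 𝓕, ∀ Y ∈ 𝓕, X ∪ Y ∈ 𝓕) :
    ∃ (U : Type) (_ : Fintype U) (E : Finset (U × S)) (w : U × S → ℝ),
      DistinctWeights E w ∧
      mmFamily E w = 𝓕 := by
  classical
  obtain ⟨ch, hch⟩ : ∃ ch : Finset S → List S, ∀ X ∈ 𝓕, (ch X).Nodup ∧ (ch X).toFinset = X ∧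
      ∀ i, ((ch X).take i).toFinset ∈ 𝓕 := by
    have h := antimatroid_exists_chain 𝓕 hempty hacc
    choose! ch h1 h2 h3 using h
    exact ⟨ch, fun X hX => ⟨h1 X hX, h2 X hX, h3 X hX⟩⟩
  obtain ⟨Xs, hXs, hXsnd⟩ : ∃ Xs : List (Finset S), (∀ X, X ∈ Xs ↔ X ∈ 𝓕) ∧ Xs.Nodup :=
    ⟨𝓕.toFinite.toFinset.toList, fun X => by
      rw [Finset.mem_toList, Set.Finite.mem_toFinset], Finset.nodup_toList _⟩
  set D : List (Finset S × List S) :=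
    Xs.flatMap (fun Y => (List.range (ch Y).length).map (fun i => (Y, (ch Y).take (i + 1))))
    with hDdef
  set g : Fin D.length → Finset S × List S := fun u => D.get u with hgdef
  set nsOf : Fin D.length → List S := fun u => (g u).2 with hnsdef
  -- basic facts about the blocks
  have hD2 : ∀ d ∈ D, (∀ p, p <+: d.2 → p.toFinset ∈ 𝓕) ∧ d.2.Nodup := by
    intro d hd
    rw [hDdef, List.mem_flatMap] at hd
    obtain ⟨Y, hY, hd⟩ := hd
    obtain ⟨i, _, rfl⟩ := List.mem_map.1 hd
    have hYF : Y ∈ 𝓕 := (hXs Y).1 hY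
    obtain ⟨hnd, _, hpre⟩ := hch Y hYF
    constructor
    · intro p hp
      rw [List.prefix_iff_eq_take] at hp
      rw [hp, List.take_take]
      exact hpre _
    · exact hnd.sublist (List.take_sublist _ _)
  have hns : ∀ u : Fin D.length, (∀ p, p <+: nsOf u → p.toFinset ∈ 𝓕) ∧ (nsOf u).Nodup := by
    intro u
    exact hD2 (g u) (List.get_mem D u)
  -- the edge list and its properties
  have hLnd : (amL nsOf).Nodup := by
    rw [amL, List.nodup_flatMap]
    constructor
    · intro u _
      apply List.Nodup.map ?_ (hns u).2
      intro a b hab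
      exact (Prod.ext_iff.1 hab).2
    · apply List.Pairwise.imp ?_ (List.nodup_finRange D.length)
      intro u v huv e he1 he2
      obtain ⟨a, _, rfl⟩ := List.mem_map.1 he1
      obtain ⟨b, _, hb⟩ := List.mem_map.1 he2
      exact huv (congrArg Prod.fst hb).symm
  obtain ⟨rk, hpairw, hrinj⟩ := exists_good_rank (amL nsOf) hLnd
  set w : Fin D.length × S → ℝ := fun e => (2:ℝ) ^ (rk e) with hwdef
  have hwpos : ∀ e, 0 < w e := fun e => by rw [hwdef]; positivity
  have hDom : AMDom w (amL nsOf) := by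
    rw [hwdef]
    exact amDom_two_pow rk (amL nsOf) hpairw
  -- distinct weights
  have hDW : DistinctWeights (amL nsOf).toFinset w := by
    intro M₁ M₂ h₁ h₂ hne heq
    apply hne
    have key : ∀ M : Finset (Fin D.length × S), M ⊆ (amL nsOf).toFinset →
        mWeight w M = ∑ a ∈ M.image rk, (2:ℝ) ^ a := by
      intro M hM
      have h3 : ∑ a ∈ M.image rk, (2:ℝ) ^ a = ∑ e ∈ M, (2:ℝ) ^ (rk e) := by
        apply Finset.sum_image
        intro x hx y hy hxy
        exact hrinj x (List.mem_toFinset.1 (hM hx)) y (List.mem_toFinset.1 (hM hy)) hxy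
      rw [h3, mWeight, hwdef]
    have himg : M₁.image rk = M₂.image rk := by
      apply two_pow_sum_injective
      rw [← key M₁ h₁.1, ← key M₂ h₂.1]
      exact heq
    ext e
    constructor
    · intro he
      have hmem : rk e ∈ M₂.image rk := himg ▸ Finset.mem_image_of_mem rk he
      obtain ⟨f, hf, hfe⟩ := Finset.mem_image.1 hmem
      have : f = e := hrinj f (List.mem_toFinset.1 (h₂.1 hf)) e (List.mem_toFinset.1 (h₁.1 he)) hfe
      exact this ▸ hf
    · intro he
      have hmem : rk e ∈ M₁.image rk := himg ▸ Finset.mem_image_of_mem rk he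
      obtain ⟨f, hf, hfe⟩ := Finset.mem_image.1 hmem
      have : f = e := hrinj f (List.mem_toFinset.1 (h₁.1 hf)) e (List.mem_toFinset.1 (h₂.1 he)) hfe
      exact this ▸ hf
  refine ⟨Fin D.length, inferInstance, (amL nsOf).toFinset, w, hDW, ?_⟩
  apply Set.ext
  intro X
  constructor
  · rintro ⟨U', M, hmax, rfl⟩
    rw [amG_unique nsOf w hwpos hLnd hDom hDW U' M hmax]
    rw [amG]
    apply amFold_feasible 𝓕 hunion nsOf _ ∅ ((List.nodup_finRange D.length).filter _)
    · simp
    · intro u _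
      exact (hns u).1
    · simpa using hempty
  · intro hX
    obtain ⟨hcnd, hcfin, _⟩ := hch X hX
    refine ⟨Finset.univ.filter (fun u => (g u).1 = X),
      amG nsOf (Finset.univ.filter (fun u => (g u).1 = X)), ?_, ?_⟩
    · exact amG_isMaxMatching nsOf w hwpos hLnd hDom _
    · -- exactness computation
      have husF2 : (List.finRange D.length).filter
            (fun u => u ∈ Finset.univ.filter (fun u => (g u).1 = X))
          = (List.finRange D.length).filter (fun u => (g u).1 = X) := by
        apply List.filter_congr
        intro u _
        simp
      have hofn : (List.finRange D.length).map g = D := by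
        rw [hgdef, ← List.ofFn_eq_map]
        exact List.ofFn_get D
      have hkey : ((List.finRange D.length).filter (fun u => (g u).1 = X)).map g
          = D.filter (fun d => d.1 = X) := by
        conv_rhs => rw [← hofn]
        rw [List.filter_map]
        rfl
      have hDfilter : D.filter (fun d => d.1 = X)
          = (List.range (ch X).length).map (fun i => (X, (ch X).take (i + 1))) := by
        rw [hDdef, List.filter_flatMap]
        have hstep : ∀ Y : Finset S,
            (((List.range (ch Y).length).map (fun i => (Y, (ch Y).take (i + 1)))).filter
              (fun d => decide (d.1 = X)))
            = if Y = X then (List.range (ch X).length).map (fun i => (X, (ch X).take (i + 1)))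
              else [] := by
          intro Y
          rw [List.filter_map]
          by_cases hYX : Y = X
          · subst hYX
            rw [if_pos rfl]
            have : List.filter ((fun d : Finset S × List S => decide (d.1 = Y)) ∘
                (fun i => (Y, (ch Y).take (i + 1)))) (List.range (ch Y).length)
                = List.range (ch Y).length := by
              apply List.filter_eq_self.2
              intro i _
              simp
            rw [this]
          · rw [if_neg hYX]
            have : List.filter ((fun d : Finset S × List S => decide (d.1 = X)) ∘
                (fun i => (Y, (ch Y).take (i + 1)))) (List.range (ch Y).length) = [] := by
              apply List.filter_eq_nil_iff.2
              intro i _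
              simp [hYX]
            rw [this, List.map_nil]
        have hfun : (fun Y => (((List.range (ch Y).length).map
              (fun i => (Y, (ch Y).take (i + 1)))).filter (fun d => decide (d.1 = X))))
            = (fun Y => if Y = X then
                (List.range (ch X).length).map (fun i => (X, (ch X).take (i + 1))) else []) :=
          funext hstep
        rw [hfun]
        exact flatMap_eq_single Xs hXsnd X ((hXs X).2 hX) _
      have hmap : ((List.finRange D.length).filter (fun u => (g u).1 = X)).map g
          = (List.range (ch X).length).map (fun i => (X, (ch X).take (i + 1))) :=
        hkey.trans hDfilter
      set usF := (List.finRange D.length).filter (fun u => (g u).1 = X) with husdef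
      have hlenusF : usF.length = (ch X).length := by
        have := congrArg List.length hmap
        simpa using this
      have hidx : ∀ (i : ℕ) (h : i < usF.length), nsOf usF[i] = (ch X).take (i + 1) := by
        intro i h
        have h2 : i < (usF.map g).length := by simpa using h
        have e1 : (usF.map g)[i] = g usF[i] := List.getElem_map g
        have h3 : i < (List.range (ch X).length).length := by
          simp only [List.length_range]
          omega
        have e2 : (usF.map g)[i]'h2 = (X, (ch X).take (i + 1)) := by
          have e3 : (usF.map g)[i]'h2 =
              (((List.range (ch X).length).map (fun i => (X, (ch X).take (i + 1))))[i]'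
                (by rw [← hmap]; exact h2)) := by
            exact List.getElem_of_eq hmap h2
          rw [e3, List.getElem_map, List.getElem_range]
        have e4 : g usF[i] = (X, (ch X).take (i + 1)) := by rw [← e1, e2]
        rw [hnsdef]
        simp only
        rw [e4]
      have hexact := amFold_exact nsOf usF (ch X) hcnd
        ((List.nodup_finRange D.length).filter _) hlenusF hidx
      have hGeq : amG nsOf (Finset.univ.filter (fun u => (g u).1 = X))
          = amFold (usF.flatMap (fun u => (nsOf u).map (fun a => (u, a)))) ∅ := by
        rw [amG, amLU, husF2]
      rw [hGeq, hexact.1, hcfin]
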